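/- Let h(z₁,z₂) = (z₁, z₂ + 1/(1-z₁)) on the unit ball 𝔹² ⊂ ℂ². Then h is biholomorphic onto its image, det Dh(z) = 1 for all z ∈ 𝔹², and sup_{z∈𝔹²} ‖Dh(z)‖ = ∞. In particular, there is no constant C with ‖Dh(z)‖ ≤ C|det Dh(z)|^{1/2} for all z. -/

import Mathlib

/-- The map `h(z₁,z₂) = (z₁, z₂ + 1/(1-z₁))` on `𝔹² ⊂ ℂ²`. -/
noncomputable def h17 (z : EuclideanSpace ℂ (Fin 2)) : EuclideanSpace ℂ (Fin 2) :=
  (EuclideanSpace.equiv (Fin 2) ℂ).symm ![z 0, z 1 + (1 - z 0)⁻¹]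

/-- The complex Jacobian matrix of `h17` at `z`. -/
noncomputable def Dh17 (z : EuclideanSpace ℂ (Fin 2)) : Matrix (Fin 2) (Fin 2) ℂ :=
  fun i j => fderiv ℂ (fun w => h17 w i) z (EuclideanSpace.single j 1)

/-- The `ℓ²` operator norm of an `n×n` complex matrix. -/
noncomputable def opNorm {n : ℕ} (M : Matrix (Fin n) (Fin n) ℂ) : ℝ :=
  ‖(Matrix.toEuclideanCLM (𝕜 := ℂ) M : EuclideanSpace ℂ (Fin n) →L[ℂ] EuclideanSpace ℂ (Fin n))‖

lemma coord_le_norm17 (v : EuclideanSpace ℂ (Fin 2)) (i : Fin 2) : ‖v i‖ ≤ ‖v‖ := by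
  have := norm_inner_le_norm (𝕜 := ℂ) (EuclideanSpace.single i 1) v
  simpa [EuclideanSpace.inner_single_left, EuclideanSpace.norm_single] using this

lemma hasFDerivAt_h17_1 (z : EuclideanSpace ℂ (Fin 2)) (hz : (1:ℂ) - z 0 ≠ 0) :
    HasFDerivAt (fun w : EuclideanSpace ℂ (Fin 2) => w 1 + (1 - w 0)⁻¹)
      (EuclideanSpace.proj 1 + ((1 - z 0)^2)⁻¹ • EuclideanSpace.proj (𝕜 := ℂ) 0) z := by
  have h1 : HasFDerivAt (fun w : EuclideanSpace ℂ (Fin 2) => w 1)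
      (EuclideanSpace.proj (𝕜 := ℂ) 1) z := (EuclideanSpace.proj (𝕜 := ℂ) (1:Fin 2)).hasFDerivAt
  have hg : HasDerivAt (fun x : ℂ => (1 - x)⁻¹) (((1 - z 0)^2)⁻¹) (z 0) := by
    have h0 : HasDerivAt (fun x : ℂ => 1 - x) (-1) (z 0) := (hasDerivAt_id _).const_sub 1
    have := h0.inv hz
    rw [neg_neg, one_div] at this
    exact this
  have h2 : HasFDerivAt (fun w : EuclideanSpace ℂ (Fin 2) => (1 - w 0)⁻¹)
      (((1 - z 0)^2)⁻¹ • EuclideanSpace.proj (𝕜 := ℂ) 0) z := by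
    have := hg.comp_hasFDerivAt z (EuclideanSpace.proj (𝕜 := ℂ) (0:Fin 2)).hasFDerivAt; exact this
  exact h1.add h2

lemma Dh17_eq (z : EuclideanSpace ℂ (Fin 2)) (hz : (1:ℂ) - z 0 ≠ 0) :
    Dh17 z = !![1, 0; ((1 - z 0)^2)⁻¹, 1] := by
  have fd0 : fderiv ℂ (fun w : EuclideanSpace ℂ (Fin 2) => h17 w 0) z
      = EuclideanSpace.proj (𝕜 := ℂ) (0:Fin 2) := by
    have : (fun w : EuclideanSpace ℂ (Fin 2) => h17 w 0)
        = fun w => EuclideanSpace.proj (𝕜 := ℂ) (0:Fin 2) w := rfl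
    rw [this]
    exact (EuclideanSpace.proj (𝕜 := ℂ) (0:Fin 2)).fderiv
  have fd1 : fderiv ℂ (fun w : EuclideanSpace ℂ (Fin 2) => h17 w 1) z
      = EuclideanSpace.proj 1 + ((1 - z 0)^2)⁻¹ • EuclideanSpace.proj (𝕜 := ℂ) 0 := by
    have : (fun w : EuclideanSpace ℂ (Fin 2) => h17 w 1)
        = fun w : EuclideanSpace ℂ (Fin 2) => w 1 + (1 - w 0)⁻¹ := rfl
    rw [this]
    exact (hasFDerivAt_h17_1 z hz).fderiv
  ext i j
  fin_cases i <;> fin_cases j <;>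
    simp [Dh17, fd0, fd1, EuclideanSpace.single_apply]

lemma diffAt_h17 (z : EuclideanSpace ℂ (Fin 2)) (hz : (1:ℂ) - z 0 ≠ 0) :
    DifferentiableAt ℂ h17 z := by
  have hg : DifferentiableAt ℂ
      (fun w : EuclideanSpace ℂ (Fin 2) => (![w 0, w 1 + (1 - w 0)⁻¹] : Fin 2 → ℂ)) z := by
    rw [differentiableAt_pi]
    intro i
    fin_cases i
    · exact ((EuclideanSpace.proj (𝕜 := ℂ) (0:Fin 2)).differentiableAt :
        DifferentiableAt ℂ (fun w : EuclideanSpace ℂ (Fin 2) => w 0) z)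
    · exact ((hasFDerivAt_h17_1 z hz).differentiableAt :
        DifferentiableAt ℂ (fun w : EuclideanSpace ℂ (Fin 2) => w 1 + (1 - w 0)⁻¹) z)
  exact ((EuclideanSpace.equiv (Fin 2) ℂ).symm.differentiableAt).comp z hg

lemma one_sub_ne17 (z : EuclideanSpace ℂ (Fin 2)) (hz : z ∈ Metric.ball (0 : EuclideanSpace ℂ (Fin 2)) 1) :
    (1:ℂ) - z 0 ≠ 0 := by
  have h1 : ‖z‖ < 1 := by simpa [Metric.mem_ball] using hz
  have h2 : ‖z 0‖ < 1 := lt_of_le_of_lt (coord_le_norm17 z 0) h1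
  intro h
  have : z 0 = 1 := by linear_combination -h
  rw [this] at h2
  simp at h2

lemma opNorm_ge17 (z : EuclideanSpace ℂ (Fin 2)) :
    ‖((1 - z 0)^2)⁻¹‖ ≤ opNorm (Dh17 z) := by
  set T := (Matrix.toEuclideanCLM (𝕜 := ℂ) (Dh17 z))
  have h1 : ‖T (EuclideanSpace.single 0 1)‖ ≤ ‖T‖ := by
    have := T.le_opNorm (EuclideanSpace.single (0:Fin 2) (1:ℂ))
    simpa [EuclideanSpace.norm_single] using this
  have h2 : (T (EuclideanSpace.single 0 1)) 1 = Dh17 z 1 0 := by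
    show (Matrix.toEuclideanCLM (𝕜 := ℂ) (Dh17 z)
      ((WithLp.equiv _ _).symm (Pi.single 0 1))) 1 = _
    rw [WithLp.equiv_symm_apply, Matrix.toEuclideanCLM_toLp]
    simp [Matrix.mulVec_single, Matrix.toLin'_apply]
  have h3 : ‖(T (EuclideanSpace.single 0 1)) 1‖ ≤ ‖T (EuclideanSpace.single 0 1)‖ :=
    coord_le_norm17 _ 1
  by_cases hz : (1:ℂ) - z 0 = 0
  · have h0 : ((1 - z 0)^2)⁻¹ = 0 := by rw [hz]; simp
    rw [h0, norm_zero]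
    exact norm_nonneg _
  · have h4 : Dh17 z 1 0 = ((1 - z 0)^2)⁻¹ := by rw [Dh17_eq z hz]; simp
    calc ‖((1 - z 0)^2)⁻¹‖ = ‖(T (EuclideanSpace.single 0 1)) 1‖ := by rw [h2, h4]
    _ ≤ ‖T (EuclideanSpace.single 0 1)‖ := h3
    _ ≤ ‖T‖ := h1
    _ = opNorm (Dh17 z) := rfl

lemma unbounded17 (C : ℝ) :
    ∃ z ∈ Metric.ball (0 : EuclideanSpace ℂ (Fin 2)) 1, ¬ opNorm (Dh17 z) ≤ C := by
  set ε : ℝ := (max C 1 + 1)⁻¹ with hεdef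
  have hM : (1:ℝ) ≤ max C 1 := le_max_right _ _
  have hMpos : (0:ℝ) < max C 1 + 1 := by linarith
  have hε : 0 < ε := inv_pos.mpr hMpos
  have hε1 : ε ≤ 1 := by
    rw [hεdef]
    rw [inv_le_one_iff₀]
    right; linarith
  have hεinv : ε⁻¹ = max C 1 + 1 := by rw [hεdef, inv_inv]
  set z : EuclideanSpace ℂ (Fin 2) := EuclideanSpace.single 0 (((1 - ε : ℝ) : ℂ))
  have hz0 : z 0 = ((1 - ε : ℝ) : ℂ) := by
    simp [z, EuclideanSpace.single_apply]
  have hzball : z ∈ Metric.ball (0 : EuclideanSpace ℂ (Fin 2)) 1 := by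
    rw [Metric.mem_ball, dist_zero_right]
    rw [EuclideanSpace.norm_single]
    rw [Complex.norm_real, Real.norm_eq_abs, abs_of_nonneg (by linarith)]
    linarith
  refine ⟨z, hzball, ?_⟩
  have hsub : (1:ℂ) - z 0 = (ε : ℂ) := by rw [hz0]; push_cast; ring
  have hnorm : ‖((1 - z 0)^2)⁻¹‖ = (ε⁻¹)^2 := by
    rw [hsub]
    rw [norm_inv, norm_pow, Complex.norm_real, Real.norm_eq_abs, abs_of_nonneg hε.le]
    exact (inv_pow ε 2).symm
  have hge := opNorm_ge17 z
  rw [hnorm] at hge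
  have h5 : ε⁻¹ ≤ (ε⁻¹)^2 := by nlinarith [hεinv, hM]
  have h6 : C < ε⁻¹ := by
    rw [hεinv]
    have := le_max_left C 1
    linarith
  intro hle
  have : opNorm (Dh17 z) < opNorm (Dh17 z) := lt_of_le_of_lt hle (lt_of_lt_of_le h6 (le_trans h5 hge))
  exact lt_irrefl _ this

/-- The map `h(z₁,z₂) = (z₁, z₂ + 1/(1-z₁))` is holomorphic and injective on `𝔹²` (hence
biholomorphic onto its image), has `det Dh ≡ 1`, but `sup ‖Dh‖ = ∞`; in particular there is
no constant `C` with `‖Dh(z)‖ ≤ C |det Dh(z)|^{1/2}` on `𝔹²`. -/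
theorem stmt17 :
    Set.InjOn h17 (Metric.ball 0 1) ∧
    DifferentiableOn ℂ h17 (Metric.ball 0 1) ∧
    (∀ z ∈ Metric.ball (0 : EuclideanSpace ℂ (Fin 2)) 1, (Dh17 z).det = 1) ∧
    (¬ ∃ C : ℝ, ∀ z ∈ Metric.ball (0 : EuclideanSpace ℂ (Fin 2)) 1, opNorm (Dh17 z) ≤ C) ∧
    (¬ ∃ C : ℝ, ∀ z ∈ Metric.ball (0 : EuclideanSpace ℂ (Fin 2)) 1,
      opNorm (Dh17 z) ≤ C * ‖(Dh17 z).det‖ ^ ((1 : ℝ) / 2)) := by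
  have hdet : ∀ z ∈ Metric.ball (0 : EuclideanSpace ℂ (Fin 2)) 1, (Dh17 z).det = 1 := by
    intro z hz
    rw [Dh17_eq z (one_sub_ne17 z hz), Matrix.det_fin_two_of]
    ring
  refine ⟨?_, ?_, hdet, ?_, ?_⟩
  · intro z _ w _ h
    have h0 : z 0 = w 0 := congrArg (fun v => v 0) h
    have h1 : z 1 + (1 - z 0)⁻¹ = w 1 + (1 - w 0)⁻¹ := congrArg (fun v => v 1) h
    rw [h0] at h1
    have h1' : z 1 = w 1 := by
      have := add_right_cancel h1
      exact this
    ext i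
    fin_cases i
    · exact h0
    · exact h1'
  · intro z hz
    exact (diffAt_h17 z (one_sub_ne17 z hz)).differentiableWithinAt
  · rintro ⟨C, hC⟩
    obtain ⟨z, hz, hb⟩ := unbounded17 C
    exact hb (hC z hz)
  · rintro ⟨C, hC⟩
    obtain ⟨z, hz, hb⟩ := unbounded17 C
    apply hb
    have := hC z hz
    rwa [hdet z hz, norm_one, Real.one_rpow, mul_one] at this
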